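/- The function f(X) = log det(L_X), where L is a positive definite d×d matrix and L_X is the principal submatrix indexed by X ⊆ {1,…,d} (with f(∅) = 0), is submodular: for all X ⊆ Y ⊂ {1,…,d} and i ∉ Y, log det L_{X∪{i}} − log det L_X ≥ log det L_{Y∪{i}} − log det L_Y. -/

import Mathlib

open Matrix

/-- Principal submatrix of `L` indexed by a finite set `X`. -/
def subKer {d : ℕ} (L : Matrix (Fin d) (Fin d) ℝ) (X : Finset (Fin d)) :
    Matrix {i // i ∈ X} {i // i ∈ X} ℝ :=
  L.submatrix (fun i => (i : Fin d)) (fun i => (i : Fin d))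

section Helpers

variable {n : Type*} [Fintype n] [DecidableEq n]

lemma symm_dot {A : Matrix n n ℝ} (hA : A.IsHermitian) (x y : n → ℝ) :
    x ⬝ᵥ (A *ᵥ y) = y ⬝ᵥ (A *ᵥ x) := by
  rw [dotProduct_mulVec, ← mulVec_transpose, dotProduct_comm]
  congr 1
  rw [← conjTranspose_eq_transpose_of_trivial, hA.eq]

lemma quad_key {A : Matrix n n ℝ} (hA : A.PosDef) (b x : n → ℝ) :
    -(b ⬝ᵥ (A⁻¹ *ᵥ b)) ≤ 2 * (b ⬝ᵥ x) + x ⬝ᵥ (A *ᵥ x) := by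
  have hdet : IsUnit A.det := isUnit_iff_ne_zero.mpr hA.det_pos.ne'
  have hb : A *ᵥ (A⁻¹ *ᵥ b) = b := by
    rw [mulVec_mulVec, A.mul_nonsing_inv hdet, one_mulVec]
  have h0 : 0 ≤ (x + A⁻¹ *ᵥ b) ⬝ᵥ (A *ᵥ (x + A⁻¹ *ᵥ b)) := by
    simpa using hA.posSemidef.dotProduct_mulVec_nonneg (x + A⁻¹ *ᵥ b)
  have hexp : (x + A⁻¹ *ᵥ b) ⬝ᵥ (A *ᵥ (x + A⁻¹ *ᵥ b))
      = x ⬝ᵥ (A *ᵥ x) + 2 * (b ⬝ᵥ x) + b ⬝ᵥ (A⁻¹ *ᵥ b) := by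
    have h1 : x ⬝ᵥ (A *ᵥ (A⁻¹ *ᵥ b)) = b ⬝ᵥ x := by rw [hb, dotProduct_comm]
    have h2 : (A⁻¹ *ᵥ b) ⬝ᵥ (A *ᵥ x) = b ⬝ᵥ x := by
      rw [symm_dot hA.1, h1]
    have h3 : (A⁻¹ *ᵥ b) ⬝ᵥ (A *ᵥ (A⁻¹ *ᵥ b)) = b ⬝ᵥ (A⁻¹ *ᵥ b) := by
      rw [hb, dotProduct_comm]
    rw [mulVec_add, dotProduct_add, add_dotProduct, add_dotProduct, h1, h2, h3]
    ring
  linarith [h0, hexp]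

lemma quad_min {A : Matrix n n ℝ} (hA : A.PosDef) (b : n → ℝ) :
    2 * (b ⬝ᵥ (-(A⁻¹ *ᵥ b))) + (-(A⁻¹ *ᵥ b)) ⬝ᵥ (A *ᵥ (-(A⁻¹ *ᵥ b)))
      = -(b ⬝ᵥ (A⁻¹ *ᵥ b)) := by
  have hdet : IsUnit A.det := isUnit_iff_ne_zero.mpr hA.det_pos.ne'
  have hb : A *ᵥ (A⁻¹ *ᵥ b) = b := by
    rw [mulVec_mulVec, A.mul_nonsing_inv hdet, one_mulVec]
  have h3 : (A⁻¹ *ᵥ b) ⬝ᵥ (A *ᵥ (A⁻¹ *ᵥ b)) = b ⬝ᵥ (A⁻¹ *ᵥ b) := by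
    rw [hb, dotProduct_comm]
  rw [mulVec_neg, dotProduct_neg, neg_dotProduct, dotProduct_neg, neg_neg, h3]
  ring

end Helpers

section SubKer

variable {d : ℕ} {L : Matrix (Fin d) (Fin d) ℝ}

lemma L_symm (hL : L.PosDef) (a c : Fin d) : L a c = L c a := by
  conv_lhs => rw [← hL.1.eq]
  simp [conjTranspose_apply]

/-- Transfer of the quadratic form to a principal submatrix. -/
lemma dot_transfer (T : Finset (Fin d)) (v : Fin d → ℝ) (hv : ∀ j, j ∉ T → v j = 0) :
    (fun k : {j // j ∈ T} => v k) ⬝ᵥ (subKer L T *ᵥ fun k : {j // j ∈ T} => v k)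
      = v ⬝ᵥ (L *ᵥ v) := by
  have inner : ∀ j : Fin d,
      (∑ l : {j // j ∈ T}, L j l * v l) = ∑ m, L j m * v m := by
    intro j
    rw [Finset.sum_coe_sort T (fun l => L j l * v l)]
    exact Finset.sum_subset (Finset.subset_univ T)
      (fun m _ hm => by rw [hv m hm, mul_zero])
  simp only [dotProduct, mulVec, subKer, submatrix_apply]
  calc (∑ k : {j // j ∈ T}, v k * ∑ l : {j // j ∈ T}, L k l * v l)
      = ∑ k ∈ T, v k * ∑ l : {j // j ∈ T}, L k l * v l :=
        Finset.sum_coe_sort T (fun j => v j * ∑ l : {j // j ∈ T}, L j l * v l)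
    _ = ∑ k ∈ T, v k * ∑ m, L k m * v m :=
        Finset.sum_congr rfl fun k _ => by rw [inner]
    _ = ∑ k, v k * ∑ m, L k m * v m :=
        Finset.sum_subset (Finset.subset_univ T)
          (fun m _ hm => by rw [hv m hm, zero_mul])

lemma subKer_posDef (hL : L.PosDef) (T : Finset (Fin d)) : (subKer L T).PosDef := by
  refine Matrix.PosDef.of_dotProduct_mulVec_pos (hL.1.submatrix _) fun x hx => ?_
  classical
  set y : Fin d → ℝ := fun j => if h : j ∈ T then x ⟨j, h⟩ else 0 with hy
  have hyv : ∀ j, j ∉ T → y j = 0 := fun j hj => dif_neg hj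
  have hyx : (fun k : {j // j ∈ T} => y k) = x := by
    funext k
    simp [hy, k.2]
  have hy0 : y ≠ 0 := by
    intro h
    apply hx
    funext k
    have := congrFun h (k : Fin d)
    rw [← hyx]
    simpa using this
  have hdt := dot_transfer (L := L) T y hyv
  rw [hyx] at hdt
  have hpos := hL.dotProduct_mulVec_pos hy0
  simp only [star_trivial] at hpos ⊢
  rw [hdt]
  exact hpos

/-- The scalar Schur complement of the `i`-th entry w.r.t. the block indexed by `S`. -/
noncomputable def schurS {d : ℕ} (L : Matrix (Fin d) (Fin d) ℝ) (i : Fin d)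
    (S : Finset (Fin d)) : ℝ :=
  L i i - (fun k : {j // j ∈ S} => L i k) ⬝ᵥ
    ((subKer L S)⁻¹ *ᵥ fun k : {j // j ∈ S} => L i k)

lemma det_insert (hL : L.PosDef) (i : Fin d) (S : Finset (Fin d)) (hiS : i ∉ S) :
    (subKer L (insert i S)).det = (subKer L S).det * schurS L i S := by
  classical
  have hA : (subKer L S).PosDef := subKer_posDef hL S
  haveI : Invertible (subKer L S) :=
    (subKer L S).invertibleOfIsUnitDet (isUnit_iff_ne_zero.mpr hA.det_pos.ne')
  let e : {j // j ∈ S} ⊕ Unit ≃ {j // j ∈ insert i S} :=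
    { toFun := Sum.elim (fun k => ⟨k, Finset.mem_insert_of_mem k.2⟩)
        (fun _ => ⟨i, Finset.mem_insert_self i S⟩)
      invFun := fun j => if h : (j : Fin d) ∈ S then Sum.inl ⟨j, h⟩ else Sum.inr ()
      left_inv := by
        rintro (k | u)
        · simp [k.2]
        · simp [hiS]
      right_inv := by
        rintro ⟨j, hj⟩
        rcases Finset.mem_insert.mp hj with h | h
        · subst h
          simp [hiS]
        · simp [h] }
  have hmat : (subKer L (insert i S)).submatrix e e =
      fromBlocks (subKer L S) (Matrix.of fun k (_ : Unit) => L k i)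
        (Matrix.of fun (_ : Unit) k => L i k) (Matrix.of fun (_ : Unit) (_ : Unit) => L i i) := by
    ext a b
    rcases a with k | u <;> rcases b with l | w <;>
      simp [subKer, fromBlocks, e, submatrix_apply]
  have hdet := det_submatrix_equiv_self e (subKer L (insert i S))
  rw [hmat] at hdet
  rw [← hdet, det_fromBlocks₁₁]
  congr 1
  rw [det_unique]
  have hsym := L_symm hL
  simp only [Matrix.sub_apply, of_apply, mul_apply, invOf_eq_nonsing_inv, schurS, dotProduct, mulVec]
  congr 1
  simp only [Finset.sum_mul, Finset.mul_sum]
  rw [Finset.sum_comm]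
  refine Finset.sum_congr rfl fun k _ => Finset.sum_congr rfl fun l _ => ?_
  rw [hsym (l : Fin d) i]
  ring

/-- Representation of the full quadratic form for vectors supported on `insert i S`
with `v i = 1`. -/
lemma quadRep (hL : L.PosDef) (i : Fin d) (S : Finset (Fin d)) (hiS : i ∉ S)
    (v : Fin d → ℝ) (hvi : v i = 1) (hv : ∀ j, j ∉ insert i S → v j = 0) :
    v ⬝ᵥ (L *ᵥ v) =
      L i i + 2 * ((fun k : {j // j ∈ S} => L i k) ⬝ᵥ fun k : {j // j ∈ S} => v k)
        + (fun k : {j // j ∈ S} => v k) ⬝ᵥ (subKer L S *ᵥ fun k : {j // j ∈ S} => v k) := by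
  classical
  have hsym := L_symm hL
  have hdouble : v ⬝ᵥ (L *ᵥ v) = ∑ j ∈ insert i S, ∑ k ∈ insert i S, v j * L j k * v k := by
    simp only [dotProduct, mulVec, Finset.mul_sum]
    rw [← Finset.sum_subset (Finset.subset_univ (insert i S))
      (fun m _ hm => by simp [hv m hm])]
    refine Finset.sum_congr rfl fun j _ => ?_
    rw [← Finset.sum_subset (Finset.subset_univ (insert i S))
      (fun m _ hm => by simp [hv m hm])]
    exact Finset.sum_congr rfl fun k _ => by ring
  have hsub : (fun k : {j // j ∈ S} => v k) ⬝ᵥ (subKer L S *ᵥ fun k : {j // j ∈ S} => v k)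
      = ∑ j ∈ S, ∑ k ∈ S, v j * L j k * v k := by
    simp only [dotProduct, mulVec, subKer, submatrix_apply, Finset.mul_sum]
    rw [Finset.sum_coe_sort S (fun j => ∑ k : {j // j ∈ S}, v j * (L j k * v k))]
    refine Finset.sum_congr rfl fun j _ => ?_
    rw [Finset.sum_coe_sort S (fun k => v j * (L j k * v k))]
    exact Finset.sum_congr rfl fun k _ => by ring
  have hb : ((fun k : {j // j ∈ S} => L i k) ⬝ᵥ fun k : {j // j ∈ S} => v k)
      = ∑ k ∈ S, L i k * v k := by
    simp only [dotProduct]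
    exact Finset.sum_coe_sort S (fun k => L i k * v k)
  have h3 : ∑ j ∈ S, (v j * L j i * v i + ∑ k ∈ S, v j * L j k * v k)
      = ∑ j ∈ S, L i j * v j + ∑ j ∈ S, ∑ k ∈ S, v j * L j k * v k := by
    rw [Finset.sum_add_distrib]
    congr 1
    exact Finset.sum_congr rfl fun j _ => by rw [hsym j i, hvi]; ring
  have hsplit : ∑ j ∈ S, ∑ k ∈ insert i S, v j * L j k * v k
      = ∑ j ∈ S, (v j * L j i * v i + ∑ k ∈ S, v j * L j k * v k) :=
    Finset.sum_congr rfl fun j _ => by rw [Finset.sum_insert hiS]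
  rw [hdouble, Finset.sum_insert hiS, Finset.sum_insert hiS, hsplit, h3, hsub, hb, hvi]
  simp only [one_mul, mul_one]
  ring

lemma schur_le_quad (hL : L.PosDef) (i : Fin d) (S : Finset (Fin d)) (hiS : i ∉ S)
    (v : Fin d → ℝ) (hvi : v i = 1) (hv : ∀ j, j ∉ insert i S → v j = 0) :
    schurS L i S ≤ v ⬝ᵥ (L *ᵥ v) := by
  rw [quadRep hL i S hiS v hvi hv]
  have := quad_key (subKer_posDef hL S) (fun k : {j // j ∈ S} => L i k)
    (fun k : {j // j ∈ S} => v k)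
  unfold schurS
  linarith

lemma schur_attained (hL : L.PosDef) (i : Fin d) (S : Finset (Fin d)) (hiS : i ∉ S) :
    ∃ v : Fin d → ℝ, v i = 1 ∧ (∀ j, j ∉ insert i S → v j = 0) ∧
      v ⬝ᵥ (L *ᵥ v) = schurS L i S := by
  classical
  set A := subKer L S with hA
  set b : {j // j ∈ S} → ℝ := fun k => L i k with hbdef
  refine ⟨fun j => if h : j ∈ S then (-(A⁻¹ *ᵥ b)) ⟨j, h⟩ else if j = i then 1 else 0,
    ?_, ?_, ?_⟩
  · simp [hiS]
  · intro j hj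
    have h1 : j ∉ S := fun h => hj (Finset.mem_insert_of_mem h)
    have h2 : j ≠ i := fun h => hj (h ▸ Finset.mem_insert_self i S)
    simp [h1, h2]
  · set v : Fin d → ℝ := fun j => if h : j ∈ S then (-(A⁻¹ *ᵥ b)) ⟨j, h⟩
      else if j = i then 1 else 0 with hvdef
    have hvi : v i = 1 := by simp [hvdef, hiS]
    have hv : ∀ j, j ∉ insert i S → v j = 0 := by
      intro j hj
      have h1 : j ∉ S := fun h => hj (Finset.mem_insert_of_mem h)
      have h2 : j ≠ i := fun h => hj (h ▸ Finset.mem_insert_self i S)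
      simp [hvdef, h1, h2]
    have hx : (fun k : {j // j ∈ S} => v k) = -(A⁻¹ *ᵥ b) := by
      funext k
      simp [hvdef, k.2]
    rw [quadRep hL i S hiS v hvi hv, hx]
    have := quad_min (subKer_posDef hL S) b
    unfold schurS
    rw [← hA, ← hbdef]
    linarith

lemma schur_pos (hL : L.PosDef) (i : Fin d) (S : Finset (Fin d)) (hiS : i ∉ S) :
    0 < schurS L i S := by
  have h1 := (subKer_posDef hL (insert i S)).det_pos
  have h2 := (subKer_posDef hL S).det_pos
  have h3 := det_insert hL i S hiS
  nlinarith

end SubKer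

/-- Submodularity of `X ↦ log det L_X` for positive definite `L`:
for `X ⊆ Y` and `i ∉ Y`,
`log det L_{X∪{i}} − log det L_X ≥ log det L_{Y∪{i}} − log det L_Y`. -/
theorem logdet_submodular {d : ℕ} (L : Matrix (Fin d) (Fin d) ℝ) (hL : L.PosDef)
    (X Y : Finset (Fin d)) (hXY : X ⊆ Y) (i : Fin d) (hi : i ∉ Y) :
    Real.log (subKer L (insert i Y)).det - Real.log (subKer L Y).det ≤
      Real.log (subKer L (insert i X)).det - Real.log (subKer L X).det := by
  have hiX : i ∉ X := fun h => hi (hXY h)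
  have hdX := det_insert hL i X hiX
  have hdY := det_insert hL i Y hi
  have hXpos := (subKer_posDef hL X).det_pos
  have hYpos := (subKer_posDef hL Y).det_pos
  have hsX := schur_pos hL i X hiX
  have hsY := schur_pos hL i Y hi
  have hmono : schurS L i Y ≤ schurS L i X := by
    obtain ⟨v, hv1, hvsupp, hveq⟩ := schur_attained hL i X hiX
    have hsupp' : ∀ j, j ∉ insert i Y → v j = 0 := by
      intro j hj
      exact hvsupp j fun h => hj (Finset.insert_subset_insert i hXY h)
    have := schur_le_quad hL i Y hi v hv1 hsupp'
    linarith
  rw [hdX, hdY, Real.log_mul hYpos.ne' hsY.ne', Real.log_mul hXpos.ne' hsX.ne']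
  have := Real.log_le_log hsY hmono
  linarith
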